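/- Assume G is abelian and let 𝓗 be the set of closed subgroups of G different from G. Then Γ̄(s, t, (t_H)_{H∈𝓗}) = e^{st}·(Γ̃(s,(t_H)_{H∈𝓗}) − 1) as formal power series. -/

import Mathlib

variable {G : Type*} [CommGroup G] {V : Type*} [AddCommGroup V] [Module ℂ V]

/-- The subspace `Fix(H)` of vectors fixed by every element of the subgroup `H`
under the representation `ρ`. -/
def fixedSpace (ρ : Representation ℂ G V) (H : Subgroup G) : Submodule ℂ V where
  carrier := {v | ∀ h ∈ H, ρ h v = v}
  add_mem' := by
    intro a b ha hb h hh
    rw [map_add, ha h hh, hb h hh]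
  zero_mem' := by
    intro h hh
    exact map_zero _
  smul_mem' := by
    intro c a ha h hh
    rw [map_smul, ha h hh]

/-- A subgroup `H ≤ G` is closed (w.r.t. `ρ`) if every subgroup `K` with `H ≤ K`
and `Fix(K) = Fix(H)` satisfies `K = H`. -/
def IsClosedSubgroup (ρ : Representation ℂ G V) (H : Subgroup G) : Prop :=
  ∀ K : Subgroup G, H ≤ K → fixedSpace ρ K = fixedSpace ρ H → K = H

open scoped Pointwise

/-- A vertex of a labelled forest on the leaf set `{1,…,n}` (encoded as `Fin n`):
`leaves` is the set of leaves of the forest lying below the vertex, `label` is the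
subgroup labelling the vertex, and, for a leaf `l` below the vertex, `coset l` is
the coset `g_l K` obtained by composing the edge labels on the path from the
vertex down to the leaf `l` (as in the paper, if the path carries, from the top,
the coset labels `a₁K, a₂K₂, …, a_lK_l`, then `coset l = a_l ⋯ a₂ a₁ K`); on
leaves not below the vertex, `coset` is `∅`.  Within the forests considered below
a vertex is uniquely determined by this data, and conversely the single-edge
labels are recovered from it, so this encoding is faithful. -/
structure FVertex (n : ℕ) (G : Type*) [Group G] where
  leaves : Finset (Fin n)
  label : Subgroup G
  coset : Fin n → Set G

/-- `[P] ≤ [Q]` for conjugacy classes of subgroups: some `G`-conjugate of `P` is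
contained in `Q`. -/
def ConjLE {G : Type*} [Group G] (P Q : Subgroup G) : Prop :=
  ∃ a : G, P.map (MulAut.conj a).toMonoidHom ≤ Q

/-- `[P] ≨ [Q]` (strictly). -/
def ConjLT {G : Type*} [Group G] (P Q : Subgroup G) : Prop :=
  ConjLE P Q ∧ ¬ ConjLE Q P

/-- `v` lies strictly below `w` in the forest: either the leaf set of `v` is
strictly smaller, or the leaf sets agree and the vertices lie on a common chain
of unique-child vertices, ordered by their labels. -/
def FVertex.below {n : ℕ} {G : Type*} [Group G] (v w : FVertex n G) : Prop :=
  v.leaves ⊂ w.leaves ∨ (v.leaves = w.leaves ∧ ConjLT v.label w.label)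

/-- `w` is a direct descendant (child) of `v` in the forest `F`. -/
def IsDirectChild {n : ℕ} {G : Type*} [Group G] (F : Set (FVertex n G))
    (w v : FVertex n G) : Prop :=
  w.below v ∧ ¬ ∃ u ∈ F, w.below u ∧ u.below v

/-- The forests of the family 𝓕(n,G,V): rooted oriented forests with leaves
labelled bijectively by `{1,…,n}` (isolated "fallen" leaves are allowed and are
implicit: they are the leaves lying below no vertex), at least one internal
vertex, internal vertices labelled by closed subgroups of `G`, and edges labelled
by cosets, subject to conditions (1)-(5) of the paper.  A forest is encoded by
its set of internal vertices, each vertex carrying its leaf set, its subgroup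
label and the composed coset data of the paths towards its leaves. -/
def IsFGForest {n : ℕ} (ρ : Representation ℂ G V) (F : Set (FVertex n G)) : Prop :=
  -- a finite forest with at least one internal vertex
  F.Finite ∧ F.Nonempty ∧
  -- every internal vertex has at least one leaf below it
  (∀ v ∈ F, v.leaves.Nonempty) ∧
  -- internal vertices are labelled by closed subgroups
  (∀ v ∈ F, IsClosedSubgroup ρ v.label) ∧
  -- the leaf sets form a laminar family (forest structure)
  (∀ v ∈ F, ∀ w ∈ F, (v.leaves ∩ w.leaves).Nonempty →
      v.leaves ⊆ w.leaves ∨ w.leaves ⊆ v.leaves) ∧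
  -- (1) if an internal vertex labelled P descends from one labelled Q, then [P] ≤ [Q]
  (∀ v ∈ F, ∀ w ∈ F, w.leaves ⊂ v.leaves → ConjLE w.label v.label) ∧
  -- (1)&(2) vertices with the same leaf set form a chain of unique children with
  -- strictly increasing labels (in particular a unique internal child has
  -- strictly smaller label class)
  (∀ v ∈ F, ∀ w ∈ F, v ≠ w → v.leaves = w.leaves →
      ConjLT v.label w.label ∨ ConjLT w.label v.label) ∧
  -- (2) if a leaf is the unique child of a vertex, its label is not {e}
  (∀ v ∈ F, ∀ l : Fin n, v.leaves = {l} →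
      (¬ ∃ w ∈ F, w ≠ v ∧ w.leaves = v.leaves ∧ ConjLT w.label v.label) →
      v.label ≠ ⊥) ∧
  -- (3) the label G appears in at most one tree, and a vertex labelled G has at
  -- most one direct descendant labelled G: the G-labelled vertices are pairwise
  -- comparable
  (∀ v ∈ F, ∀ w ∈ F, v.label = ⊤ → w.label = ⊤ → v = w ∨ v.below w ∨ w.below v) ∧
  -- (4) the (composed) coset data consists of left cosets of the vertex label …
  (∀ v ∈ F, ∀ l ∈ v.leaves, ∃ a : G, v.coset l = a • (v.label : Set G)) ∧
  (∀ v ∈ F, ∀ l : Fin n, l ∉ v.leaves → v.coset l = ∅) ∧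
  -- … and is compatible along edges: the edge from `v` (labelled Q) to a direct
  -- child `w` (labelled P) carries a coset label aQ with a⁻¹Pa ⊆ Q, and (by (5))
  -- the edge towards the child subtree containing the smallest leaf carries eQ
  (∀ v ∈ F, ∀ w ∈ F, IsDirectChild F w v →
      ∃ a : G, (w.label.map (MulAut.conj a⁻¹).toMonoidHom ≤ v.label) ∧
        (∀ l ∈ w.leaves, v.coset l = w.coset l * (a • (v.label : Set G))) ∧
        (∀ hv : v.leaves.Nonempty, v.leaves.min' hv ∈ w.leaves → a ∈ v.label)) ∧
  -- (5) the composed coset towards the smallest leaf below a vertex is eK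
  (∀ v ∈ F, ∀ hv : v.leaves.Nonempty, v.coset (v.leaves.min' hv) = (v.label : Set G))

/-- The set of roots (maximal vertices) of the forest `F`: each corresponds to a
tree of `F`. -/
def rootsOf {n : ℕ} {G : Type*} [Group G] (F : Set (FVertex n G)) :
    Set (FVertex n G) :=
  {v | v ∈ F ∧ ∀ w ∈ F, ¬ v.below w}

open Classical in
/-- The fallen leaves of `F`: the leaves lying below no internal vertex. -/
noncomputable def fallenLeaves {n : ℕ} {G : Type*} [Group G]
    (F : Set (FVertex n G)) : Finset (Fin n) :=
  Finset.univ.filter fun l => ∀ v ∈ F, l ∉ v.leaves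

/-- The number of connected components of `F` (trees and fallen leaves each count
as one component). -/
noncomputable def components {n : ℕ} {G : Type*} [Group G]
    (F : Set (FVertex n G)) : ℕ :=
  (rootsOf F).ncard + (fallenLeaves F).card

open Classical in
/-- The number of leaves of `F` attached to `H`-labelled vertices, i.e. whose
parent (the minimal internal vertex above them) is labelled `H`. -/
noncomputable def attachedCount {n : ℕ} {G : Type*} [Group G]
    (F : Set (FVertex n G)) (H : Subgroup G) : ℕ :=
  (Finset.univ.filter fun l : Fin n => ∃ v ∈ F, l ∈ v.leaves ∧ v.label = H ∧
    ∀ w ∈ F, l ∈ w.leaves → (v = w ∨ v.below w)).card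

/-- An `H`-tree on the leaf set `{1,…,m}`: a single rooted oriented tree, with
leaves bijectively labelled by `{1,…,m}`, all of whose internal vertices are
labelled by the (closed) subgroup `H`, with edges labelled by cosets of `H`,
normalized as in (5); every internal vertex has at least two children or a single
child which is a leaf (the latter only if `H ≠ {e}`). -/
def IsHTree {m : ℕ} (ρ : Representation ℂ G V) (H : Subgroup G)
    (F : Set (FVertex m G)) : Prop :=
  IsFGForest ρ F ∧ (∀ v ∈ F, v.label = H) ∧ ∃ v ∈ F, v.leaves = Finset.univ

/-- `λ_{H,i}`: the number of `H`-trees on the leaf set `{1,…,i}`. -/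
noncomputable def lamHT (ρ : Representation ℂ G V) (H : Subgroup G) (i : ℕ) : ℕ :=
  Nat.card {F : Set (FVertex i G) // IsHTree ρ H F}

/-- Formal exponential of a multivariate power series (intended for series with
zero constant term, for which the coefficientwise sum Σ_m f^m/m! is finite: the
coefficient of a monomial `d` in `f^m` vanishes for `m` beyond the total degree
of `d`). -/
noncomputable def mvExp {σ : Type*} (f : MvPowerSeries σ ℚ) : MvPowerSeries σ ℚ :=
  fun d => ∑ m ∈ Finset.range (d.sum (fun _ e => e) + 1),
    (m.factorial : ℚ)⁻¹ * MvPowerSeries.coeff d (f ^ m)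

instance finiteSubgroupOfFinite [Finite G] : Finite (Subgroup G) :=
  Finite.of_injective (fun H : Subgroup G => (H : Set G)) SetLike.coe_injective

/-- 𝓗: the set of closed subgroups of `G` different from `G`. -/
def ClosedProper (ρ : Representation ℂ G V) : Type _ :=
  {H : Subgroup G // IsClosedSubgroup ρ H ∧ H ≠ ⊤}

instance [Finite G] (ρ : Representation ℂ G V) : Finite (ClosedProper ρ) := by
  unfold ClosedProper; infer_instance

/-- The variables: `s`, `t`, and one variable `t_H` for each `H ∈ 𝓗`. -/
abbrev MVarT (ρ : Representation ℂ G V) : Type _ := Unit ⊕ Unit ⊕ ClosedProper ρ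

variable (ρ : Representation ℂ G V)

/-- The variable `s`. -/
def sVar : MVarT ρ := Sum.inl ()

/-- The variable `t`. -/
def tVar : MVarT ρ := Sum.inr (Sum.inl ())

/-- The variable `t_H`. -/
def tHVar (H : ClosedProper ρ) : MVarT ρ := Sum.inr (Sum.inr H)

/-- `Σ_{H∈𝓗} a_H` for a monomial `d`. -/
noncomputable def leafDeg (d : MVarT ρ →₀ ℕ) : ℕ := ∑ᶠ H : ClosedProper ρ, d (tHVar ρ H)

variable [Fintype G] [FiniteDimensional ℂ V]

open Classical

/-- The series `Γ̃(s,(t_H)_{H∈𝓗})`: the coefficient of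
`s^j ∏_H t_H^{a_H} / (Σ_H a_H)!` is `γ″(j,(a_H))`, the number of forests in
𝓕″(n,G,V) (no G-labels, no fallen leaves), `n = Σ_H a_H`, with `j` connected
components and, for each `H ∈ 𝓗`, `a_H` leaves attached to `H`-labelled vertices. -/
noncomputable def GammaTildeH : MvPowerSeries (MVarT ρ) ℚ :=
  fun d => if d = 0 then 1 else if d (tVar ρ) ≠ 0 then 0 else
    (Nat.card {F : Set (FVertex (leafDeg ρ d) G) // IsFGForest ρ F ∧
        (∀ v ∈ F, v.label ≠ ⊤) ∧ fallenLeaves F = ∅ ∧ components F = d (sVar ρ) ∧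
        ∀ H : ClosedProper ρ, attachedCount F H.1 = d (tHVar ρ H)} : ℚ) /
      (leafDeg ρ d).factorial

/-- The series `Γ̄(s,t,(t_H)_{H∈𝓗})`: the coefficient of
`s^j t^h ∏_H t_H^{a_H} / (h + Σ_H a_H)!` is `γ′(h,j,(a_H))`, the number of
forests in 𝓕′(n,G,V) (no G-labels), `n = h + Σ_H a_H`, with `h` fallen leaves,
`j` connected components and, for each `H ∈ 𝓗`, `a_H` leaves attached to
`H`-labelled vertices. -/
noncomputable def GammaBarH : MvPowerSeries (MVarT ρ) ℚ :=
  fun d =>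
    (Nat.card {F : Set (FVertex (d (tVar ρ) + leafDeg ρ d) G) // IsFGForest ρ F ∧
        (∀ v ∈ F, v.label ≠ ⊤) ∧ (fallenLeaves F).card = d (tVar ρ) ∧
        components F = d (sVar ρ) ∧
        ∀ H : ClosedProper ρ, attachedCount F H.1 = d (tHVar ρ H)} : ℚ) /
      (d (tVar ρ) + leafDeg ρ d).factorial


section ForestAux

set_option linter.unusedSectionVars false

open Classical

variable {n N : ℕ}

lemma FVertex.ext' {v w : FVertex n G} (h1 : v.leaves = w.leaves)
    (h2 : v.label = w.label) (h3 : v.coset = w.coset) : v = w := by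
  cases v; cases w; simp_all

/-- Pushforward of a vertex along an order embedding of leaf sets. -/
noncomputable def vmap (f : Fin n ↪o Fin N) (v : FVertex n G) : FVertex N G :=
  ⟨v.leaves.map f.toEmbedding, v.label, Function.extend f v.coset (fun _ => ∅)⟩

@[simp] lemma vmap_leaves (f : Fin n ↪o Fin N) (v : FVertex n G) :
    (vmap f v).leaves = v.leaves.map f.toEmbedding := rfl

@[simp] lemma vmap_label (f : Fin n ↪o Fin N) (v : FVertex n G) :
    (vmap f v).label = v.label := rfl

@[simp] lemma vmap_coset_apply (f : Fin n ↪o Fin N) (v : FVertex n G) (k : Fin n) :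
    (vmap f v).coset (f k) = v.coset k := by
  show Function.extend f v.coset (fun _ => ∅) (f k) = v.coset k
  exact f.injective.extend_apply _ _ _

lemma vmap_coset_of_not_range (f : Fin n ↪o Fin N) (v : FVertex n G) {l : Fin N}
    (hl : ¬ ∃ k, f k = l) : (vmap f v).coset l = ∅ := by
  show Function.extend f v.coset (fun _ => ∅) l = ∅
  exact Function.extend_apply' _ _ _ hl

lemma vmap_injective (f : Fin n ↪o Fin N) :
    Function.Injective (vmap (G := G) f) := by
  intro v w h
  refine FVertex.ext' ?_ (congrArg (fun u : FVertex N G => u.label) h) ?_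
  · have := congrArg (fun u : FVertex N G => u.leaves) h
    simpa [Finset.map_inj] using this
  · funext k
    have := congrArg (fun u : FVertex N G => u.coset (f k)) h
    simpa using this

lemma below_vmap (f : Fin n ↪o Fin N) {v w : FVertex n G} :
    (vmap f v).below (vmap f w) ↔ v.below w := by
  simp [FVertex.below, Finset.map_ssubset_map, Finset.map_inj]

lemma isDirectChild_vmap (f : Fin n ↪o Fin N) {F : Set (FVertex n G)}
    {v w : FVertex n G} :
    IsDirectChild (vmap f '' F) (vmap f w) (vmap f v) ↔ IsDirectChild F w v := by
  unfold IsDirectChild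
  rw [below_vmap]
  refine and_congr Iff.rfl (not_congr ?_)
  constructor
  · rintro ⟨u, ⟨u', hu', rfl⟩, h1, h2⟩
    exact ⟨u', hu', (below_vmap f).1 h1, (below_vmap f).1 h2⟩
  · rintro ⟨u, hu, h1, h2⟩
    exact ⟨vmap f u, ⟨u, hu, rfl⟩, (below_vmap f).2 h1, (below_vmap f).2 h2⟩

lemma min'_map (f : Fin n ↪o Fin N) (s : Finset (Fin n))
    (hs : (s.map f.toEmbedding).Nonempty) :
    (s.map f.toEmbedding).min' hs = f (s.min' (Finset.map_nonempty.1 hs)) := by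
  apply le_antisymm
  · exact Finset.min'_le _ _ (Finset.mem_map_of_mem _ (Finset.min'_mem _ _))
  · obtain ⟨k, hk, he⟩ := Finset.mem_map.1 ((s.map f.toEmbedding).min'_mem hs)
    rw [← he]
    exact f.le_iff_le.2 (Finset.min'_le _ _ hk)



section ForestAux1b
set_option linter.unusedSectionVars false
variable {n N : ℕ}

@[simp] lemma mem_map_oe {f : Fin n ↪o Fin N} {k : Fin n} {s : Finset (Fin n)} :
    f k ∈ s.map f.toEmbedding ↔ k ∈ s := Finset.mem_map' _

@[simp] lemma map_singleton_oe (f : Fin n ↪o Fin N) (k : Fin n) :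
    ({k} : Finset (Fin n)).map f.toEmbedding = {f k} := Finset.map_singleton _ _

end ForestAux1b

section ForestAux2

set_option linter.unusedSectionVars false
set_option maxHeartbeats 1000000

open Classical

variable {n N : ℕ}

lemma isFGForest_vmap_iff (f : Fin n ↪o Fin N) (F : Set (FVertex n G)) :
    IsFGForest ρ (vmap f '' F) ↔ IsFGForest ρ F := by
  unfold IsFGForest
  refine and_congr (Set.finite_image_iff (vmap_injective f).injOn) <|
    and_congr Set.image_nonempty <|
    and_congr ?_ <| and_congr ?_ <| and_congr ?_ <| and_congr ?_ <|
    and_congr ?_ <| and_congr ?_ <| and_congr ?_ <| and_congr ?_ <|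
    and_congr ?_ <| and_congr ?_ ?_
  -- (3) nonempty leaves
  · simp [Set.forall_mem_image, Finset.map_nonempty]
  -- closed labels
  · simp [Set.forall_mem_image]
  -- laminar
  · simp [Set.forall_mem_image, ← Finset.map_inter, Finset.map_nonempty,
      Finset.map_subset_map]
  -- (1)
  · simp [Set.forall_mem_image, Finset.map_ssubset_map]
  -- chain with same leaves
  · simp [Set.forall_mem_image, Finset.map_inj, (vmap_injective f).ne_iff]
  -- (2)
  · constructor
    · intro hcl v hv k hk hnot
      refine hcl (vmap f v) ⟨v, hv, rfl⟩ (f k) ?_ ?_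
      · rw [vmap_leaves, hk, map_singleton_oe]
      · rintro ⟨w, ⟨w', hw', rfl⟩, hne, hleq, hlt⟩
        apply hnot
        refine ⟨w', hw', fun hh => hne (by rw [hh]), ?_, hlt⟩
        simpa [Finset.map_inj] using hleq
    · intro hcl v' hvmem l hleq hnot
      obtain ⟨v, hv, rfl⟩ := hvmem
      rw [vmap_leaves] at hleq
      have hl : l ∈ v.leaves.map f.toEmbedding := by
        rw [hleq]; exact Finset.mem_singleton_self l
      obtain ⟨k, hk, rfl⟩ := Finset.mem_map.1 hl
      have hkeq : v.leaves = {k} := by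
        refine (Finset.map_inj (f := f.toEmbedding)).1 ?_
        rw [hleq, map_singleton_oe]; rfl
      refine hcl v hv k hkeq ?_
      rintro ⟨w', hw', hne, hleq', hlt⟩
      exact hnot ⟨vmap f w', ⟨w', hw', rfl⟩, fun hh => hne (vmap_injective f hh),
        by simp [hleq'], hlt⟩
  -- (3') top labels comparable
  · simp [Set.forall_mem_image, below_vmap, (vmap_injective f).eq_iff]
  -- (4) cosets are cosets
  · constructor
    · intro hc v hv k hk
      simpa using hc (vmap f v) ⟨v, hv, rfl⟩ (f k) (Finset.mem_map_of_mem _ hk)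
    · rintro hc v' ⟨v, hv, rfl⟩ l hl
      obtain ⟨k, hk, rfl⟩ := Finset.mem_map.1 hl
      simpa using hc v hv k hk
  -- coset vanishes off leaves
  · constructor
    · intro hc v hv k hk
      have := hc (vmap f v) ⟨v, hv, rfl⟩ (f k)
        (fun h => hk (mem_map_oe.1 h))
      simpa using this
    · rintro hc v' ⟨v, hv, rfl⟩ l hl
      by_cases hr : ∃ k, f k = l
      · obtain ⟨k, rfl⟩ := hr
        rw [vmap_coset_apply]
        exact hc v hv k (fun h => hl (Finset.mem_map_of_mem _ h))
      · exact vmap_coset_of_not_range f v hr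
  -- edge compatibility
  · constructor
    · intro hc v hv w hw hdc
      obtain ⟨a, h1, h2, h3⟩ := hc (vmap f v) ⟨v, hv, rfl⟩ (vmap f w) ⟨w, hw, rfl⟩
        ((isDirectChild_vmap f).2 hdc)
      refine ⟨a, h1, ?_, ?_⟩
      · intro k hk
        simpa using h2 (f k) (Finset.mem_map_of_mem _ hk)
      · intro hvne hmin
        have hvne' : (vmap f v).leaves.Nonempty := by
          simpa [Finset.map_nonempty] using hvne
        have := h3 hvne'
        simp only [vmap_leaves, min'_map, mem_map_oe, vmap_label] at this
        exact this hmin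
    · rintro hc v' ⟨v, hv, rfl⟩ w' ⟨w, hw, rfl⟩ hdc
      obtain ⟨a, h1, h2, h3⟩ := hc v hv w hw ((isDirectChild_vmap f).1 hdc)
      refine ⟨a, h1, ?_, ?_⟩
      · intro l hl
        obtain ⟨k, hk, rfl⟩ := Finset.mem_map.1 hl
        simpa using h2 k hk
      · intro hvne hmin
        have hvne0 : v.leaves.Nonempty := by
          simpa [Finset.map_nonempty] using hvne
        simp only [vmap_leaves, min'_map, mem_map_oe] at hmin
        exact h3 hvne0 hmin
  -- composed coset at min' is the label
  · constructor
    · intro hc v hv hvne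
      have hvne' : (vmap f v).leaves.Nonempty := by
        simpa [Finset.map_nonempty] using hvne
      have := hc (vmap f v) ⟨v, hv, rfl⟩ hvne'
      simpa only [vmap_leaves, min'_map, vmap_coset_apply, vmap_label] using this
    · rintro hc v' ⟨v, hv, rfl⟩ hvne
      have hvne0 : v.leaves.Nonempty := by
        simpa [Finset.map_nonempty] using hvne
      simp only [vmap_leaves, min'_map, vmap_coset_apply, vmap_label]
      exact hc v hv hvne0

end ForestAux2

section ForestAux3

set_option linter.unusedSectionVars false
set_option maxHeartbeats 1000000

open Classical

variable {n N : ℕ}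

/-- Pullback of a vertex along an order embedding. -/
noncomputable def vpull (f : Fin n ↪o Fin N) (v : FVertex N G) : FVertex n G :=
  ⟨v.leaves.preimage f.toEmbedding f.injective.injOn, v.label, fun k => v.coset (f k)⟩

lemma vpull_vmap (f : Fin n ↪o Fin N) (v : FVertex n G) : vpull f (vmap f v) = v := by
  refine FVertex.ext' ?_ rfl ?_
  · exact Finset.preimage_map f.toEmbedding v.leaves
  · funext k
    show (vmap f v).coset (f k) = v.coset k
    simp

lemma vmap_vpull (f : Fin n ↪o Fin N) (v : FVertex N G)
    (hle : ∀ l ∈ v.leaves, ∃ k, f k = l)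
    (hco : ∀ l, l ∉ v.leaves → v.coset l = ∅) : vmap f (vpull f v) = v := by
  refine FVertex.ext' ?_ rfl ?_
  · ext l
    simp only [vmap_leaves, Finset.mem_map, Finset.mem_preimage, vpull]
    constructor
    · rintro ⟨k, hk, rfl⟩; exact hk
    · intro hl
      obtain ⟨k, rfl⟩ := hle l hl
      exact ⟨k, hl, rfl⟩
  · funext l
    by_cases hr : ∃ k, f k = l
    · obtain ⟨k, rfl⟩ := hr
      rw [vmap_coset_apply]
      rfl
    · rw [vmap_coset_of_not_range f _ hr]
      refine (hco l fun hl => hr (hle l hl)).symm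

lemma roots_vmap (f : Fin n ↪o Fin N) (F : Set (FVertex n G)) :
    rootsOf (vmap f '' F) = vmap f '' rootsOf F := by
  ext u
  constructor
  · rintro ⟨⟨v, hv, rfl⟩, hmax⟩
    exact ⟨v, ⟨hv, fun w hw hb => hmax (vmap f w) ⟨w, hw, rfl⟩ ((below_vmap f).2 hb)⟩, rfl⟩
  · rintro ⟨v, ⟨hv, hmax⟩, rfl⟩
    refine ⟨⟨v, hv, rfl⟩, ?_⟩
    rintro w ⟨w', hw', rfl⟩ hb
    exact hmax w' hw' ((below_vmap f).1 hb)

lemma fallen_vmap (f : Fin n ↪o Fin N) (F : Set (FVertex n G)) :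
    fallenLeaves (vmap f '' F) =
      (fallenLeaves F).map f.toEmbedding ∪ (Finset.univ.map f.toEmbedding)ᶜ := by
  ext l
  simp only [fallenLeaves, Finset.mem_filter, Finset.mem_univ, true_and,
    Finset.mem_union, Finset.mem_compl, Finset.mem_map, Set.mem_image,
    forall_exists_index, and_imp]
  constructor
  · intro hall
    by_cases hr : ∃ k, f.toEmbedding k = l
    · obtain ⟨k, rfl⟩ := hr
      left
      refine ⟨k, ?_, rfl⟩
      intro v hv
      have := hall (vmap f v) v hv rfl
      simpa using this
    · right
      intro hh
      obtain ⟨k, hk⟩ := hh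
      exact hr ⟨k, hk⟩
  · rintro (⟨k, hk, rfl⟩ | hnr) u v hv rfl
    · simpa using hk v hv
    · intro hmem
      obtain ⟨k, _, rfl⟩ := Finset.mem_map.1 hmem
      exact hnr ⟨k, rfl⟩

lemma attached_vmap (f : Fin n ↪o Fin N) (F : Set (FVertex n G)) (H : Subgroup G) :
    attachedCount (vmap f '' F) H = attachedCount F H := by
  unfold attachedCount
  have hset : (Finset.univ.filter fun l : Fin N => ∃ v ∈ vmap f '' F, l ∈ v.leaves ∧
        v.label = H ∧ ∀ w ∈ vmap f '' F, l ∈ w.leaves → (v = w ∨ v.below w)) =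
      (Finset.univ.filter fun k : Fin n => ∃ v ∈ F, k ∈ v.leaves ∧ v.label = H ∧
        ∀ w ∈ F, k ∈ w.leaves → (v = w ∨ v.below w)).map f.toEmbedding := by
    ext l
    simp only [Finset.mem_filter, Finset.mem_univ, true_and, Finset.mem_map]
    constructor
    · rintro ⟨u, ⟨v, hv, rfl⟩, hlv, hlab, hmin⟩
      obtain ⟨k, hk, rfl⟩ := Finset.mem_map.1 hlv
      refine ⟨k, ⟨v, hv, hk, hlab, ?_⟩, rfl⟩
      intro w hw hkw
      rcases hmin (vmap f w) ⟨w, hw, rfl⟩ (mem_map_oe.2 hkw) with h | h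
      · exact Or.inl (vmap_injective f h)
      · exact Or.inr ((below_vmap f).1 h)
    · rintro ⟨k, ⟨v, hv, hk, hlab, hmin⟩, rfl⟩
      refine ⟨vmap f v, ⟨v, hv, rfl⟩, mem_map_oe.2 hk, hlab, ?_⟩
      rintro w ⟨w', hw', rfl⟩ hlw
      rcases hmin w' hw' (mem_map_oe.1 hlw) with h | h
      · exact Or.inl (by rw [h])
      · exact Or.inr ((below_vmap f).2 h)
  rw [hset, Finset.card_map]

lemma components_vmap (f : Fin n ↪o Fin N) (F : Set (FVertex n G)) :
    components (vmap f '' F) =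
      (rootsOf F).ncard + (fallenLeaves (vmap f '' F)).card := by
  rw [components, roots_vmap, Set.ncard_image_of_injective _ (vmap_injective f)]

end ForestAux3

section ForestAux4

set_option linter.unusedSectionVars false
set_option maxHeartbeats 1000000

open Classical

variable {n N : ℕ}

lemma mem_fallen {m : ℕ} {F : Set (FVertex m G)} {l : Fin m} :
    l ∈ fallenLeaves F ↔ ∀ v ∈ F, l ∉ v.leaves := by
  simp [fallenLeaves]

lemma univ_map_emb (s : Finset (Fin N)) (hc : s.card = n) :
    Finset.univ.map (s.orderEmbOfFin hc).toEmbedding = s := by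
  ext l
  simp only [Finset.mem_map, Finset.mem_univ, true_and]
  constructor
  · rintro ⟨k, rfl⟩
    exact Finset.orderEmbOfFin_mem s hc k
  · intro hl
    have : l ∈ Set.range (s.orderEmbOfFin hc) := by
      rw [Finset.range_orderEmbOfFin]; exact hl
    obtain ⟨k, hk⟩ := this
    exact ⟨k, hk⟩

lemma emb_congr {S₁ S₂ : Finset (Fin N)} (hS : S₁ = S₂)
    (p₁ : S₁ᶜ.card = n) (p₂ : S₂ᶜ.card = n) :
    S₁ᶜ.orderEmbOfFin p₁ = S₂ᶜ.orderEmbOfFin p₂ := by subst hS; rfl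

lemma fallen_vmap_of_empty {S : Finset (Fin N)} (hc : Sᶜ.card = n)
    {F' : Set (FVertex n G)} (hfe : fallenLeaves F' = ∅) :
    fallenLeaves (vmap (Sᶜ.orderEmbOfFin hc) '' F') = S := by
  rw [fallen_vmap, hfe, Finset.map_empty, Finset.empty_union, univ_map_emb, compl_compl]

lemma components_vmap_of_empty {S : Finset (Fin N)} (hc : Sᶜ.card = n)
    {F' : Set (FVertex n G)} (hfe : fallenLeaves F' = ∅) :
    components (vmap (Sᶜ.orderEmbOfFin hc) '' F') = components F' + S.card := by
  rw [components_vmap, fallen_vmap_of_empty hc hfe]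
  unfold components
  rw [hfe]
  simp

lemma card_bar (h n j : ℕ) (hjh : h ≤ j) (a : ClosedProper ρ → ℕ) :
    Nat.card {F : Set (FVertex (h + n) G) // IsFGForest ρ F ∧
        (∀ v ∈ F, v.label ≠ ⊤) ∧ (fallenLeaves F).card = h ∧
        components F = j ∧ ∀ H : ClosedProper ρ, attachedCount F H.1 = a H}
      = (h + n).choose h * Nat.card {F : Set (FVertex n G) // IsFGForest ρ F ∧
        (∀ v ∈ F, v.label ≠ ⊤) ∧ fallenLeaves F = ∅ ∧
        components F = j - h ∧ ∀ H : ClosedProper ρ, attachedCount F H.1 = a H} := by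
  classical
  have hcard : ∀ S : Finset (Fin (h + n)), S.card = h → Sᶜ.card = n := by
    intro S hS
    rw [Finset.card_compl, hS, Fintype.card_fin]
    omega
  -- forward transfer (for invFun)
  have main1 : ∀ (S : Finset (Fin (h + n))) (hS : S.card = h)
      (F' : Set (FVertex n G)),
      (IsFGForest ρ F' ∧ (∀ v ∈ F', v.label ≠ ⊤) ∧ fallenLeaves F' = ∅ ∧
        components F' = j - h ∧ ∀ H : ClosedProper ρ, attachedCount F' H.1 = a H) →
      (IsFGForest ρ (vmap (Sᶜ.orderEmbOfFin (hcard S hS)) '' F') ∧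
        (∀ v ∈ (vmap (Sᶜ.orderEmbOfFin (hcard S hS)) '' F'), v.label ≠ ⊤) ∧
        (fallenLeaves (vmap (Sᶜ.orderEmbOfFin (hcard S hS)) '' F')).card = h ∧
        components (vmap (Sᶜ.orderEmbOfFin (hcard S hS)) '' F') = j ∧
        ∀ H : ClosedProper ρ,
          attachedCount (vmap (Sᶜ.orderEmbOfFin (hcard S hS)) '' F') H.1 = a H) := by
    rintro S hS F' ⟨h1, h2, h3, h4, h5⟩
    refine ⟨(isFGForest_vmap_iff ρ _ F').2 h1, ?_, ?_, ?_, ?_⟩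
    · rintro v ⟨v', hv', rfl⟩
      exact h2 v' hv'
    · rw [fallen_vmap_of_empty _ h3, hS]
    · rw [components_vmap_of_empty _ h3, h4, hS]
      omega
    · intro H
      rw [attached_vmap]
      exact h5 H
  -- the key reconstruction identity
  have key : ∀ (F : Set (FVertex (h + n) G)), IsFGForest ρ F →
      ∀ (hS : (fallenLeaves F).card = h),
      vmap ((fallenLeaves F)ᶜ.orderEmbOfFin (hcard _ hS)) ''
        (vpull ((fallenLeaves F)ᶜ.orderEmbOfFin (hcard _ hS)) '' F) = F := by
    intro F hF hS
    rw [← Set.image_comp]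
    have hid : ∀ v ∈ F,
        (vmap ((fallenLeaves F)ᶜ.orderEmbOfFin (hcard _ hS)) ∘
          vpull ((fallenLeaves F)ᶜ.orderEmbOfFin (hcard _ hS))) v = v := by
      intro v hv
      apply vmap_vpull
      · intro l hl
        have hlS : l ∉ fallenLeaves F := by
          intro hmem
          exact (mem_fallen.1 hmem) v hv hl
        have hr : l ∈ Set.range ((fallenLeaves F)ᶜ.orderEmbOfFin (hcard _ hS)) := by
          rw [Finset.range_orderEmbOfFin]
          exact Finset.mem_coe.2 (Finset.mem_compl.2 hlS)
        exact hr
      · obtain ⟨-, -, -, -, -, -, -, -, -, -, c11, -, -⟩ := hF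
        exact c11 v hv
    rw [Set.image_congr hid, Set.image_id']
  -- backward transfer (for toFun)
  have main2 : ∀ (F : Set (FVertex (h + n) G)) (h1 : IsFGForest ρ F)
      (h2 : ∀ v ∈ F, v.label ≠ ⊤) (h3 : (fallenLeaves F).card = h)
      (h4 : components F = j) (h5 : ∀ H : ClosedProper ρ, attachedCount F H.1 = a H),
      (IsFGForest ρ (vpull ((fallenLeaves F)ᶜ.orderEmbOfFin (hcard _ h3)) '' F) ∧
        (∀ v ∈ (vpull ((fallenLeaves F)ᶜ.orderEmbOfFin (hcard _ h3)) '' F), v.label ≠ ⊤) ∧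
        fallenLeaves (vpull ((fallenLeaves F)ᶜ.orderEmbOfFin (hcard _ h3)) '' F) = ∅ ∧
        components (vpull ((fallenLeaves F)ᶜ.orderEmbOfFin (hcard _ h3)) '' F) = j - h ∧
        ∀ H : ClosedProper ρ,
          attachedCount (vpull ((fallenLeaves F)ᶜ.orderEmbOfFin (hcard _ h3)) '' F) H.1 = a H) := by
    intro F h1 h2 h3 h4 h5
    set f := (fallenLeaves F)ᶜ.orderEmbOfFin (hcard _ h3) with hfdef
    set F' : Set (FVertex n G) := vpull f '' F with hF'def
    have hk : vmap f '' F' = F := key F h1 h3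
    have hfe : fallenLeaves F' = ∅ := by
      have hf := fallen_vmap f F'
      rw [hk] at hf
      have hu : Finset.univ.map f.toEmbedding = (fallenLeaves F)ᶜ :=
        univ_map_emb _ (hcard _ h3)
      rw [hu, compl_compl] at hf
      have hsub : (fallenLeaves F').map f.toEmbedding ⊆ fallenLeaves F := by
        rw [hf]
        exact Finset.subset_union_left
      have hsub2 : (fallenLeaves F').map f.toEmbedding ⊆ (fallenLeaves F)ᶜ := by
        rw [← hu]
        exact Finset.map_subset_map.2 (Finset.subset_univ _)
      have : (fallenLeaves F').map f.toEmbedding ⊆ ∅ := by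
        rw [← Finset.inter_compl (fallenLeaves F)]
        exact Finset.subset_inter hsub hsub2
      exact Finset.map_eq_empty.1 (Finset.subset_empty.1 this)
    have hforest : IsFGForest ρ F' := by
      refine (isFGForest_vmap_iff ρ f F').1 ?_
      rw [hk]; exact h1
    have hcomp : components F' = j - h := by
      have hc := components_vmap_of_empty (hcard _ h3) hfe
      rw [hk, h3] at hc
      omega
    refine ⟨hforest, ?_, hfe, hcomp, ?_⟩
    · intro v' hv'
      have hm : vmap f v' ∈ F := by
        rw [← hk]; exact Set.mem_image_of_mem _ hv'
      exact h2 _ hm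
    · intro H
      have := attached_vmap f F' H.1
      rw [hk] at this
      rw [← this]
      exact h5 H
  have e : {F : Set (FVertex (h + n) G) // IsFGForest ρ F ∧
        (∀ v ∈ F, v.label ≠ ⊤) ∧ (fallenLeaves F).card = h ∧
        components F = j ∧ ∀ H : ClosedProper ρ, attachedCount F H.1 = a H} ≃
      ({S : Finset (Fin (h + n)) // S.card = h} ×
       {F' : Set (FVertex n G) // IsFGForest ρ F' ∧
        (∀ v ∈ F', v.label ≠ ⊤) ∧ fallenLeaves F' = ∅ ∧
        components F' = j - h ∧ ∀ H : ClosedProper ρ, attachedCount F' H.1 = a H}) := by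
    refine
      { toFun := fun F =>
          ⟨⟨fallenLeaves F.1, F.2.2.2.1⟩,
           ⟨vpull ((fallenLeaves F.1)ᶜ.orderEmbOfFin (hcard _ F.2.2.2.1)) '' F.1,
            main2 F.1 F.2.1 F.2.2.1 F.2.2.2.1 F.2.2.2.2.1 F.2.2.2.2.2⟩⟩,
        invFun := fun p =>
          ⟨vmap ((p.1.1)ᶜ.orderEmbOfFin (hcard _ p.1.2)) '' p.2.1,
           main1 p.1.1 p.1.2 p.2.1 p.2.2⟩,
        left_inv := ?_, right_inv := ?_ }
    · rintro ⟨F, hF⟩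
      exact Subtype.ext (key F hF.1 hF.2.2.1)
    · rintro ⟨⟨S, hS⟩, ⟨F', hF'⟩⟩
      have hfS : fallenLeaves (vmap (Sᶜ.orderEmbOfFin (hcard S hS)) '' F') = S :=
        fallen_vmap_of_empty _ hF'.2.2.1
      refine Prod.ext (Subtype.ext hfS) (Subtype.ext ?_)
      show vpull _ '' _ = F'
      rw [emb_congr hfS _ (hcard S hS)]
      rw [← Set.image_comp]
      have hid2 : ∀ v' ∈ F',
          (vpull (Sᶜ.orderEmbOfFin (hcard S hS)) ∘ vmap (Sᶜ.orderEmbOfFin (hcard S hS))) v'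
            = v' := fun v' _ => vpull_vmap _ v'
      rw [Set.image_congr hid2, Set.image_id']
  rw [Nat.card_congr e, Nat.card_prod]
  congr 1
  rw [Nat.card_eq_fintype_card]
  rw [Fintype.card_finset_len, Fintype.card_fin]

end ForestAux4

section ForestAux5

set_option linter.unusedSectionVars false
set_option maxHeartbeats 1000000

open Classical MvPowerSeries

lemma fallen_card_lt {m : ℕ} {F : Set (FVertex m G)} (hF : IsFGForest ρ F) :
    (fallenLeaves F).card < m := by
  obtain ⟨hfin, ⟨v, hv⟩, hne, -⟩ := hF
  obtain ⟨l, hl⟩ := hne v hv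
  have hlf : l ∉ fallenLeaves F := fun hmem => (mem_fallen.1 hmem) v hv hl
  have hss : fallenLeaves F ⊂ Finset.univ :=
    (Finset.ssubset_iff_of_subset (Finset.subset_univ _)).2 ⟨l, Finset.mem_univ l, hlf⟩
  have := Finset.card_lt_card hss
  simpa using this

lemma sVar_ne_tVar : sVar ρ ≠ tVar ρ := fun h => by simp [sVar, tVar] at h

lemma tHVar_ne_sVar (H : ClosedProper ρ) : tHVar ρ H ≠ sVar ρ := fun h => by simp [tHVar, sVar] at h

lemma tHVar_ne_tVar (H : ClosedProper ρ) : tHVar ρ H ≠ tVar ρ :=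
  fun h => by simp [tHVar, tVar] at h

lemma apply_le_degsum (d : MVarT ρ →₀ ℕ) (x : MVarT ρ) :
    d x ≤ d.sum fun _ e => e := by
  by_cases h : x ∈ d.support
  · exact Finset.single_le_sum (fun _ _ => Nat.zero_le _) h
  · simp [Finsupp.notMem_support_iff.1 h]

lemma XsXt_pow (m : ℕ) :
    ((X (sVar ρ) * X (tVar ρ) : MvPowerSeries (MVarT ρ) ℚ)) ^ m =
      monomial (Finsupp.single (sVar ρ) m + Finsupp.single (tVar ρ) m) 1 := by
  induction m with
  | zero =>
      rw [pow_zero, Finsupp.single_zero, Finsupp.single_zero, add_zero,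
        monomial_zero_one]
  | succ k ih =>
      have he : Finsupp.single (sVar ρ) k + Finsupp.single (tVar ρ) k +
          (Finsupp.single (sVar ρ) 1 + Finsupp.single (tVar ρ) 1) =
          Finsupp.single (sVar ρ) (k + 1) + Finsupp.single (tVar ρ) (k + 1) := by
        ext x
        simp only [Finsupp.add_apply, Finsupp.single_apply]
        split_ifs <;> omega
      rw [pow_succ, ih, X, X, monomial_mul_monomial, monomial_mul_monomial, he]
      norm_num

lemma coeff_XsXt_pow (m : ℕ) (d : MVarT ρ →₀ ℕ) :
    coeff d ((X (sVar ρ) * X (tVar ρ) : MvPowerSeries (MVarT ρ) ℚ) ^ m) =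
      if d = Finsupp.single (sVar ρ) m + Finsupp.single (tVar ρ) m then 1 else 0 := by
  rw [XsXt_pow, coeff_monomial]

lemma mvExp_XsXt_eq (m : ℕ) :
    mvExp (X (sVar ρ) * X (tVar ρ) : MvPowerSeries (MVarT ρ) ℚ)
      (Finsupp.single (sVar ρ) m + Finsupp.single (tVar ρ) m) = (m.factorial : ℚ)⁻¹ := by
  unfold mvExp
  rw [Finset.sum_eq_single m]
  · rw [coeff_XsXt_pow, if_pos rfl, mul_one]
  · intro b _ hb
    rw [coeff_XsXt_pow, if_neg, mul_zero]
    intro hc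
    apply hb
    have := congrArg (fun e : MVarT ρ →₀ ℕ => e (tVar ρ)) hc
    have h2 : m = b := by
      simpa [Finsupp.single_apply, if_neg (sVar_ne_tVar ρ)] using this
    exact h2.symm
  · intro hm
    exfalso
    apply hm
    rw [Finset.mem_range]
    have : (Finsupp.single (sVar ρ) m + Finsupp.single (tVar ρ) m) (tVar ρ) ≤
        (Finsupp.single (sVar ρ) m + Finsupp.single (tVar ρ) m).sum fun _ e => e :=
      apply_le_degsum ρ _ _
    have h2 : (Finsupp.single (sVar ρ) m + Finsupp.single (tVar ρ) m) (tVar ρ) = m := by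
      simp [Finsupp.single_apply, sVar_ne_tVar ρ]
    omega

lemma mvExp_XsXt_ne (d : MVarT ρ →₀ ℕ)
    (hd : ∀ m : ℕ, d ≠ Finsupp.single (sVar ρ) m + Finsupp.single (tVar ρ) m) :
    mvExp (X (sVar ρ) * X (tVar ρ) : MvPowerSeries (MVarT ρ) ℚ) d = 0 := by
  unfold mvExp
  apply Finset.sum_eq_zero
  intro m _
  rw [coeff_XsXt_pow, if_neg (hd m), mul_zero]

end ForestAux5

section ForestAux6

set_option linter.unusedSectionVars false
set_option maxHeartbeats 1000000

open Classical MvPowerSeries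

lemma coeff_sub_one (q2 : MVarT ρ →₀ ℕ) :
    coeff q2 (GammaTildeH ρ - 1) = if q2 = 0 then 0 else GammaTildeH ρ q2 := by
  rw [map_sub, coeff_one, coeff_apply]
  split_ifs with he
  · subst he
    show GammaTildeH ρ 0 - 1 = 0
    simp [GammaTildeH]
  · rw [sub_zero]

lemma term_shape {d q1 q2 : MVarT ρ →₀ ℕ} (hq : q1 + q2 = d)
    (hterm : coeff q1 (mvExp (X (sVar ρ) * X (tVar ρ) : MvPowerSeries (MVarT ρ) ℚ)) *
      coeff q2 (GammaTildeH ρ - 1) ≠ 0) :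
    q1 = Finsupp.single (sVar ρ) (d (tVar ρ)) + Finsupp.single (tVar ρ) (d (tVar ρ)) ∧
      d (tVar ρ) ≤ d (sVar ρ) := by
  have h1 : coeff q1 (mvExp (X (sVar ρ) * X (tVar ρ) : MvPowerSeries (MVarT ρ) ℚ)) ≠ 0 :=
    fun h => hterm (by rw [h, zero_mul])
  have h2 : coeff q2 (GammaTildeH ρ - 1) ≠ 0 :=
    fun h => hterm (by rw [h, mul_zero])
  obtain ⟨m, hm⟩ : ∃ m, q1 = Finsupp.single (sVar ρ) m + Finsupp.single (tVar ρ) m := by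
    by_contra hc
    push_neg at hc
    exact h1 (by rw [coeff_apply]; exact mvExp_XsXt_ne ρ q1 hc)
  rw [coeff_sub_one] at h2
  have hq2 : q2 ≠ 0 := by
    intro h; rw [if_pos h] at h2; exact h2 rfl
  rw [if_neg hq2] at h2
  have hq2t : q2 (tVar ρ) = 0 := by
    by_contra hc
    apply h2
    unfold GammaTildeH
    rw [if_neg hq2, if_pos hc]
  have hq1t : q1 (tVar ρ) = m := by
    rw [hm, Finsupp.add_apply, Finsupp.single_apply, Finsupp.single_apply,
      if_neg (sVar_ne_tVar ρ), if_pos rfl]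
    omega
  have hq1s : q1 (sVar ρ) = m := by
    rw [hm, Finsupp.add_apply, Finsupp.single_apply, Finsupp.single_apply,
      if_pos rfl, if_neg (fun h : tVar ρ = sVar ρ => sVar_ne_tVar ρ h.symm)]
    omega
  have hdt : d (tVar ρ) = m := by
    have := congrArg (fun e : MVarT ρ →₀ ℕ => e (tVar ρ)) hq
    simp only [Finsupp.add_apply] at this
    omega
  have hds : m ≤ d (sVar ρ) := by
    have := congrArg (fun e : MVarT ρ →₀ ℕ => e (sVar ρ)) hq
    simp only [Finsupp.add_apply] at this
    omega
  exact ⟨by rw [hm, hdt], by omega⟩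

end ForestAux6
/-!
STATEMENT 14 (G abelian): Γ̄(s,t,(t_H)_{H∈𝓗}) = e^{st}·(Γ̃(s,(t_H)_{H∈𝓗}) − 1).
-/

set_option maxHeartbeats 1600000 in
theorem GammaBarH_eq
    (hfaith : Function.Injective ρ) (hfix : fixedSpace ρ ⊤ = ⊥) :
    GammaBarH ρ =
      mvExp (MvPowerSeries.X (sVar ρ) * MvPowerSeries.X (tVar ρ)) *
        (GammaTildeH ρ - 1) := by
  classical
  have arith_helper : ∀ (C K A B D : ℚ), A ≠ 0 → B ≠ 0 → D ≠ 0 →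
      C * A * B = D → (C * K) / D = A⁻¹ * (K / B) := by
    intro C K A B D hA hB hD hfac
    field_simp
    linear_combination K * hfac
  ext d
  rw [MvPowerSeries.coeff_mul]
  by_cases hjh : d (tVar ρ) ≤ d (sVar ρ)
  · -- main case
    set e1 : MVarT ρ →₀ ℕ :=
      Finsupp.single (sVar ρ) (d (tVar ρ)) + Finsupp.single (tVar ρ) (d (tVar ρ)) with he1
    have he1s : e1 (sVar ρ) = d (tVar ρ) := by
      rw [he1, Finsupp.add_apply, Finsupp.single_apply, Finsupp.single_apply,
        if_pos rfl, if_neg (fun h : tVar ρ = sVar ρ => sVar_ne_tVar ρ h.symm)]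
      omega
    have he1t : e1 (tVar ρ) = d (tVar ρ) := by
      rw [he1, Finsupp.add_apply, Finsupp.single_apply, Finsupp.single_apply,
        if_neg (sVar_ne_tVar ρ), if_pos rfl]
      omega
    have he1o : ∀ x, x ≠ sVar ρ → x ≠ tVar ρ → e1 x = 0 := by
      intro x hxs hxt
      rw [he1, Finsupp.add_apply, Finsupp.single_apply, Finsupp.single_apply,
        if_neg (fun h : sVar ρ = x => hxs h.symm), if_neg (fun h : tVar ρ = x => hxt h.symm)]
      omega
    have hle : e1 ≤ d := by
      rw [Finsupp.le_def]
      intro x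
      by_cases hxs : x = sVar ρ
      · subst hxs; rw [he1s]; exact hjh
      · by_cases hxt : x = tVar ρ
        · subst hxt; rw [he1t]
        · rw [he1o x hxs hxt]; exact Nat.zero_le _
    have hmem : (e1, d - e1) ∈ Finset.HasAntidiagonal.antidiagonal d :=
      Finset.HasAntidiagonal.mem_antidiagonal.2 (add_tsub_cancel_of_le hle)
    have hzero : ∀ b ∈ Finset.HasAntidiagonal.antidiagonal d, b ≠ (e1, d - e1) →
        MvPowerSeries.coeff b.1
            (mvExp (MvPowerSeries.X (sVar ρ) * MvPowerSeries.X (tVar ρ))) *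
          MvPowerSeries.coeff b.2 (GammaTildeH ρ - 1) = 0 := by
      rintro ⟨q1, q2⟩ hmem2 hne
      by_contra hterm
      have hq : q1 + q2 = d := Finset.HasAntidiagonal.mem_antidiagonal.1 hmem2
      obtain ⟨hq1, -⟩ := term_shape ρ hq hterm
      rw [← he1] at hq1
      apply hne
      have hq2 : q2 = d - e1 := by
        rw [← hq1, ← hq, add_tsub_cancel_left]
      exact Prod.ext hq1 hq2
    rw [Finset.sum_eq_single_of_mem _ hmem hzero]
    set d2 : MVarT ρ →₀ ℕ := d - e1 with hd2def
    have hd2t : d2 (tVar ρ) = 0 := by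
      rw [hd2def, Finsupp.tsub_apply, he1t]
      omega
    have hd2s : d2 (sVar ρ) = d (sVar ρ) - d (tVar ρ) := by
      rw [hd2def, Finsupp.tsub_apply, he1s]
    have hd2H : ∀ H : ClosedProper ρ, d2 (tHVar ρ H) = d (tHVar ρ H) := by
      intro H
      rw [hd2def, Finsupp.tsub_apply, he1o _ (tHVar_ne_sVar ρ H) (tHVar_ne_tVar ρ H)]
      omega
    have hld : leafDeg ρ d2 = leafDeg ρ d := by
      unfold leafDeg
      exact finsum_congr fun H => hd2H H
    have hE : MvPowerSeries.coeff e1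
        (mvExp (MvPowerSeries.X (sVar ρ) * MvPowerSeries.X (tVar ρ) :
          MvPowerSeries (MVarT ρ) ℚ)) = ((d (tVar ρ)).factorial : ℚ)⁻¹ := by
      rw [MvPowerSeries.coeff_apply, he1]
      exact mvExp_XsXt_eq ρ _
    rw [hE, coeff_sub_one]
    by_cases hd2 : d2 = 0
    · rw [if_pos hd2, mul_zero, MvPowerSeries.coeff_apply]
      have hn0 : leafDeg ρ d = 0 := by
        rw [← hld, hd2]
        simp [leafDeg]
      have hemp : IsEmpty {F : Set (FVertex (d (tVar ρ) + leafDeg ρ d) G) //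
          IsFGForest ρ F ∧ (∀ v ∈ F, v.label ≠ ⊤) ∧
          (fallenLeaves F).card = d (tVar ρ) ∧ components F = d (sVar ρ) ∧
          ∀ H : ClosedProper ρ, attachedCount F H.1 = d (tHVar ρ H)} := by
        constructor
        rintro ⟨F, h1, h2, h3, h4, h5⟩
        have hlt := fallen_card_lt ρ h1
        omega
      haveI := hemp
      simp only [GammaBarH]
      rw [Nat.card_of_isEmpty]
      simp
    · rw [if_neg hd2]
      have hgt : GammaTildeH ρ d2 = (Nat.card {F : Set (FVertex (leafDeg ρ d) G) //
          IsFGForest ρ F ∧ (∀ v ∈ F, v.label ≠ ⊤) ∧ fallenLeaves F = ∅ ∧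
          components F = d (sVar ρ) - d (tVar ρ) ∧
          ∀ H : ClosedProper ρ, attachedCount F H.1 = d (tHVar ρ H)} : ℚ) /
          (leafDeg ρ d).factorial := by
        simp only [GammaTildeH]
        rw [if_neg hd2, if_neg (fun hc : d2 (tVar ρ) ≠ 0 => hc hd2t)]
        simp only [hd2s, hd2H]
        rw [hld]
      rw [MvPowerSeries.coeff_apply, hgt]
      show GammaBarH ρ d = _
      simp only [GammaBarH]
      rw [card_bar ρ (d (tVar ρ)) (leafDeg ρ d) (d (sVar ρ)) hjh (fun H => d (tHVar ρ H))]
      have hfacn := Nat.choose_mul_factorial_mul_factorial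
        (Nat.le_add_right (d (tVar ρ)) (leafDeg ρ d))
      rw [Nat.add_sub_cancel_left] at hfacn
      have hfac : ((d (tVar ρ) + leafDeg ρ d).choose (d (tVar ρ)) : ℚ) *
          (d (tVar ρ)).factorial * (leafDeg ρ d).factorial
          = ((d (tVar ρ) + leafDeg ρ d).factorial : ℚ) := by
        exact_mod_cast congrArg (Nat.cast : ℕ → ℚ) hfacn
      rw [Nat.cast_mul]
      exact arith_helper _ _ _ _ _
        (Nat.cast_ne_zero.2 (Nat.factorial_ne_zero _))
        (Nat.cast_ne_zero.2 (Nat.factorial_ne_zero _))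
        (Nat.cast_ne_zero.2 (Nat.factorial_ne_zero _)) hfac
  · -- degenerate case: more fallen leaves than components
    have hz : ∀ b ∈ Finset.HasAntidiagonal.antidiagonal d,
        MvPowerSeries.coeff b.1
            (mvExp (MvPowerSeries.X (sVar ρ) * MvPowerSeries.X (tVar ρ))) *
          MvPowerSeries.coeff b.2 (GammaTildeH ρ - 1) = 0 := by
      rintro ⟨q1, q2⟩ hmem
      by_contra hterm
      exact hjh (term_shape ρ (Finset.HasAntidiagonal.mem_antidiagonal.1 hmem) hterm).2
    rw [Finset.sum_eq_zero hz, MvPowerSeries.coeff_apply]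
    have hemp : IsEmpty {F : Set (FVertex (d (tVar ρ) + leafDeg ρ d) G) //
        IsFGForest ρ F ∧ (∀ v ∈ F, v.label ≠ ⊤) ∧
        (fallenLeaves F).card = d (tVar ρ) ∧ components F = d (sVar ρ) ∧
        ∀ H : ClosedProper ρ, attachedCount F H.1 = d (tHVar ρ H)} := by
      constructor
      rintro ⟨F, h1, h2, h3, h4, h5⟩
      have hcomp : components F = (rootsOf F).ncard + (fallenLeaves F).card := rfl
      omega
    haveI := hemp
    simp only [GammaBarH]
    rw [Nat.card_of_isEmpty]
    simp
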